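/- arXiv:0709.1537 — 2 statements merged into one kernel-verified Lean document; each statement's English description precedes it below -/
import Mathlib

section
/- For any two positive integers k and ℓ there exists an integer n₃ > ℓ such that (𝔪^{n₃}M + H⁰_𝔪(M)) :_M 𝔪^{k} ⊆ 𝔪^{ℓ}M + H⁰_𝔪(M). -/
open IsLocalRing

section Preliminaries

variable {R : Type} [CommRing R]

/-- The colon submodule `N :_M I = { m ∈ M | I m ⊆ N }`. -/
def modColon {M : Type} [AddCommGroup M] [Module R M] (N : Submodule R M) (I : Ideal R) :
    Submodule R M where
  carrier := {m | ∀ r ∈ I, r • m ∈ N}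
  add_mem' := fun {a b} ha hb r hr => by
    rw [smul_add]; exact N.add_mem (ha r hr) (hb r hr)
  zero_mem' := fun r hr => by rw [smul_zero]; exact N.zero_mem
  smul_mem' := fun c {m} hm r hr => by
    rw [smul_comm]; exact N.smul_mem c (hm r hr)

theorem mem_modColon {M : Type} [AddCommGroup M] [Module R M] {N : Submodule R M} {I : Ideal R}
    {m : M} : m ∈ modColon N I ↔ ∀ r ∈ I, r • m ∈ N := Iff.rfl

/-- The socle `Soc(N) = 0 :_N 𝔪` of a module `N` over a local ring `R`. -/
def socle (R : Type) [CommRing R] [IsLocalRing R] (N : Type) [AddCommGroup N] [Module R N] :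
    Submodule R N :=
  modColon (⊥ : Submodule R N) (maximalIdeal R)

/-- The length of a module, as the Krull dimension of its lattice of submodules. -/
noncomputable def moduleLength (R N : Type) [CommRing R] [AddCommGroup N] [Module R N] :
    WithBot ℕ∞ :=
  Order.krullDim (Submodule R N)

/-- `s(N)`: the socle dimension of `N`, i.e. the dimension over the residue field `k = R/𝔪` of
the socle `Soc(N) = 0 :_N 𝔪`, equivalently the length of the socle as an `R`-module
(the socle is a `k`-vector space). -/
noncomputable def socDim (R : Type) [CommRing R] [IsLocalRing R] (N : Type) [AddCommGroup N]
    [Module R N] : WithBot ℕ∞ :=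
  moduleLength R (socle R N)

/-- The `0`-th local cohomology `H⁰_𝔪(N)`, as the submodule of elements of `N` annihilated by
some power of the maximal ideal. -/
def H0 (R : Type) [CommRing R] [IsLocalRing R] (N : Type) [AddCommGroup N] [Module R N] :
    Submodule R N :=
  ⨆ n : ℕ, modColon (⊥ : Submodule R N) (maximalIdeal R ^ n)

/-- The `i`-th local cohomology module `H^i_𝔪(N)` of `N` with support in the maximal ideal. -/
noncomputable def Hm (R : Type) [CommRing R] [IsLocalRing R] (i : ℕ) (N : Type) [AddCommGroup N]
    [Module R N] : Type :=
  ((localCohomology (maximalIdeal R) i).obj (ModuleCat.of R N))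

noncomputable instance {i : ℕ} {N : Type} [IsLocalRing R] [AddCommGroup N] [Module R N] :
    AddCommGroup (Hm R i N) := by
  unfold Hm; infer_instance

noncomputable instance {i : ℕ} {N : Type} [IsLocalRing R] [AddCommGroup N] [Module R N] :
    Module R (Hm R i N) := by
  unfold Hm; infer_instance

variable (R) [IsLocalRing R] (M : Type) [AddCommGroup M] [Module R M]

/-- The ideal `𝔮_j = (x₁,…,x_j)` generated by the first `j` elements of the sequence `x`
(`𝔮₀ = 0`). -/
def qIdeal {d : ℕ} (x : Fin d → R) (j : ℕ) : Ideal R :=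
  Ideal.span (x '' {i : Fin d | (i : ℕ) < j})

/-- `x₁, …, x_d` is a system of parameters of `M`: the `xᵢ` lie in the maximal ideal and
`M/(x₁,…,x_d)M` has finite length (where `d = dim M`).  The ideal generated by a system of
parameters is a parameter ideal of `M`. -/
def IsParamSeq {d : ℕ} (x : Fin d → R) : Prop :=
  (∀ i, x i ∈ maximalIdeal R) ∧
    IsFiniteLength R (M ⧸ (Ideal.span (Set.range x) • (⊤ : Submodule R M)))

/-- `M` is a generalized Cohen-Macaulay module of dimension `d`:
the local cohomology `H^i_𝔪(M)` has finite length for all `i = 0, …, d-1`. -/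
def IsGenCM (d : ℕ) : Prop :=
  ∀ i < d, IsFiniteLength R (Hm R i M)

/-- `dim M = d`: the Krull dimension of `M`, i.e. of `R / Ann M`, equals `d`. -/
def dimEq (d : ℕ) : Prop :=
  ringKrullDim (R ⧸ Module.annihilator R M) = (d : WithBot ℕ∞)

/-- `𝔮 = (x₁,…,x_d)` is a standard parameter ideal of `M`:
it is a parameter ideal with `𝔮 ⬝ H^i_𝔪(M/𝔮_j M) = 0` for all `i + j < d`. -/
def IsStandardParamSeq {d : ℕ} (x : Fin d → R) : Prop :=
  IsParamSeq R M x ∧ ∀ i j : ℕ, i + j < d →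
    Ideal.span (Set.range x) ≤
      Module.annihilator R (Hm R i (M ⧸ (qIdeal R x j • (⊤ : Submodule R M))))

end Preliminaries

/-- **Lemma 2.3.** Let `M` be a finitely generated module over a Noetherian local ring `(R, 𝔪)`
with `dim M = d ≥ 1`, and let `k` and `ℓ` be two positive integers.  Then there exists an
integer `n₃ > ℓ` such that `(𝔪^{n₃}M + H⁰_𝔪(M)) :_M 𝔪^k ⊆ 𝔪^ℓ M + H⁰_𝔪(M)`. -/
theorem stmt_4
    (R : Type) [CommRing R] [IsLocalRing R] [IsNoetherianRing R]
    (M : Type) [AddCommGroup M] [Module R M] [Module.Finite R M]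
    (d : ℕ) (hd : 1 ≤ d) (hdim : dimEq R M d)
    (k l : ℕ) (hk : 0 < k) (hl : 0 < l) :
    ∃ n₃ : ℕ, l < n₃ ∧
      modColon ((maximalIdeal R ^ n₃ • (⊤ : Submodule R M)) ⊔ H0 R M) (maximalIdeal R ^ k) ≤
        (maximalIdeal R ^ l • (⊤ : Submodule R M)) ⊔ H0 R M := by
  classical
  set I := maximalIdeal R with hI
  -- The chain `n ↦ (0 :_M 𝔪^n)` is increasing, so it stabilizes (M is Noetherian).
  have hmono : Monotone fun n : ℕ => modColon (⊥ : Submodule R M) (I ^ n) := by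
    intro n m hnm x hx r hr
    exact hx r (Ideal.pow_le_pow_right hnm hr)
  obtain ⟨t, ht⟩ := monotone_stabilizes_iff_noetherian.mpr (inferInstance : IsNoetherian R M)
    ⟨fun n : ℕ => modColon (⊥ : Submodule R M) (I ^ n), hmono⟩
  have hH0 : H0 R M = modColon (⊥ : Submodule R M) (I ^ t) := by
    show (⨆ n : ℕ, modColon (⊥ : Submodule R M) (I ^ n)) = modColon (⊥ : Submodule R M) (I ^ t)
    refine le_antisymm (iSup_le fun n => ?_)
      (le_iSup (fun n : ℕ => modColon (⊥ : Submodule R M) (I ^ n)) t)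
    rcases le_total n t with h | h
    · exact hmono h
    · exact (ht n h).ge
  -- Generators of `𝔪^k`.
  obtain ⟨S, hS⟩ := IsNoetherian.noetherian (I ^ k : Ideal R)
  -- The product module `P = S → M` and the multiplication map `φ`.
  set P := (↥S → M) with hP
  set φ : M →ₗ[R] P := LinearMap.pi fun a : S => (a : R) • LinearMap.id with hφ
  set Npi : Submodule R P := Submodule.pi Set.univ fun _ : S => H0 R M with hNpi
  set W : Submodule R P := LinearMap.range φ ⊔ Npi with hW
  -- Artin–Rees for `W ⊆ P`.
  obtain ⟨c, hc⟩ := Ideal.exists_pow_inf_eq_pow_smul (M := P) I W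
  refine ⟨c + t + l + 1, by omega, fun x hx => ?_⟩
  set j := c + t + l + 1 - c with hj
  have hjtl : t ≤ j ∧ l ≤ j := by omega
  -- Decompose `a • x` for each generator `a`.
  have hax : ∀ a : S, (a : R) • x ∈ (I ^ (c + t + l + 1) • (⊤ : Submodule R M)) ⊔ H0 R M := by
    intro a
    exact hx (a : R) (hS ▸ Submodule.subset_span a.2)
  choose y hy z hz hyz using fun a => Submodule.mem_sup.mp (hax a)
  have hφx : ∀ a : S, φ x a = y a + z a := fun a => (hyz a).symm
  -- `Y = (y a)_a` lies in `𝔪^{n₃}P ⊓ W`.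
  have hY1 : (fun a => y a : P) ∈ I ^ (c + t + l + 1) • (⊤ : Submodule R P) := by
    have : (fun a => y a : P) = ∑ a : S, Pi.single a (y a) := by
      rw [Finset.univ_sum_single]
    rw [this]
    refine Submodule.sum_mem _ fun a _ => ?_
    have : Pi.single (M := fun _ : S => M) a (y a) ∈
        (I ^ (c + t + l + 1) • (⊤ : Submodule R M)).map (LinearMap.single R (fun _ : S => M) a) :=
      Submodule.mem_map_of_mem (hy a)
    rw [Submodule.map_smul''] at this
    exact Submodule.smul_mono (le_refl _) le_top this
  have hZ : (fun a => z a : P) ∈ Npi := by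
    intro a _
    exact hz a
  have hY2 : (fun a => y a : P) ∈ W := by
    have hxy : (fun a => y a : P) = φ x - (fun a => z a : P) := by
      funext a
      show y a = φ x a - z a
      rw [hφx a]; abel
    rw [hxy]
    exact sub_mem (le_sup_left (α := Submodule R P) ⟨x, rfl⟩) (le_sup_right (α := Submodule R P) hZ)
  have hY : (fun a => y a : P) ∈ I ^ j • W := by
    have := hc (c + t + l + 1) (by omega) ▸ Submodule.mem_inf.mpr ⟨hY1, hY2⟩
    exact Submodule.smul_mono (le_refl _) inf_le_right this
  -- `𝔪^j • Npi = 0` since `𝔪^t` kills `H⁰`.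
  have hNkill : I ^ j • Npi = ⊥ := by
    rw [eq_bot_iff]
    refine Submodule.smul_le.mpr fun r hr p hp => ?_
    have hr' : r ∈ I ^ t := Ideal.pow_le_pow_right hjtl.1 hr
    have : ∀ a : S, r • p a = 0 := fun a => by
      have := (hH0.le (hp a trivial)) r hr'
      simpa using this
    funext a
    exact this a
  -- Hence `Y = φ w` for some `w ∈ 𝔪^j M`.
  have hYrange : (fun a => y a : P) ∈ (I ^ j • (⊤ : Submodule R M)).map φ := by
    rw [Submodule.map_smul'', Submodule.map_top]
    rw [hW, Submodule.smul_sup, hNkill, sup_bot_eq] at hY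
    exact hY
  obtain ⟨w, hw, hφw⟩ := hYrange
  -- `φ (x - w) = Z`, so each generator multiplies `x - w` into `H⁰`.
  have hxw : ∀ a : S, (a : R) • (x - w) ∈ H0 R M := by
    intro a
    have h1 : φ (x - w) a = φ x a - φ w a := by
      rw [map_sub]; rfl
    have h2 : φ w a = y a := by rw [hφw]
    have : φ (x - w) a = z a := by
      rw [h1, h2, hφx a]; abel
    have happ : ∀ v : M, φ v a = (a : R) • v := fun v => rfl
    have h3 : φ (x - w) a = (a : R) • (x - w) := happ _
    rw [← h3, this]
    exact hz a
  -- So `𝔪^k (x - w) ⊆ H⁰`, hence `x - w ∈ (H⁰ : 𝔪^k) ⊆ (0 : 𝔪^{t+k}) ⊆ H⁰`.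
  have hcolon : ∀ r ∈ (I ^ k : Ideal R), r • (x - w) ∈ H0 R M := by
    intro r hr
    have : (I ^ k : Ideal R) ≤ (H0 R M).comap (LinearMap.toSpanSingleton R M (x - w)) := by
      rw [← hS, Submodule.span_le]
      intro a ha
      exact hxw ⟨a, ha⟩
    exact this hr
  have hxwH0 : x - w ∈ H0 R M := by
    have hmem : x - w ∈ modColon (⊥ : Submodule R M) (I ^ (t + k)) := by
      intro r hr
      rw [pow_add] at hr
      have : (I ^ t * I ^ k : Ideal R) ≤
          (⊥ : Submodule R M).comap (LinearMap.toSpanSingleton R M (x - w)) := by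
        refine Ideal.mul_le.mpr fun a ha b hb => ?_
        have hb' : b • (x - w) ∈ H0 R M := hcolon b hb
        have : a • (b • (x - w)) = 0 := by
          have := (hH0.le hb') a ha
          simpa using this
        simp only [Submodule.mem_comap, LinearMap.toSpanSingleton_apply]
        rw [mul_smul]
        simpa using this
      exact this hr
    show x - w ∈ ⨆ n : ℕ, modColon (⊥ : Submodule R M) (I ^ n)
    exact (le_iSup (fun n : ℕ => modColon (⊥ : Submodule R M) (I ^ n)) (t + k)) hmem
  -- Conclude.
  have hwl : w ∈ I ^ l • (⊤ : Submodule R M) :=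
    Submodule.smul_mono_left (Ideal.pow_le_pow_right hjtl.2) hw
  have : x = w + (x - w) := by abel
  rw [this]
  exact Submodule.add_mem _ (Submodule.mem_sup_left hwl) (Submodule.mem_sup_right hxwH0)
end

section
/- There exists a positive integer n₄ such that for all ideals K of R with K ⊆ 𝔪^{n₄}, one has (KM + H⁰_𝔪(M)) :_M 𝔪 = (KM :_M 𝔪) + H⁰_𝔪(M). -/
open IsLocalRing

section Aux

/-- Associated primes of a module are among those of a submodule and the quotient. -/
lemma ass_subset_aux {R : Type} [CommRing R] {X : Type} [AddCommGroup X] [Module R X]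
    (K : Submodule R X) :
    associatedPrimes R X ⊆ associatedPrimes R K ∪ associatedPrimes R (X ⧸ K) := by
  exact associatedPrimes.subset_union_of_exact K.injective_subtype (LinearMap.exact_subtype_mkQ K)

/-- Finiteness of the set of associated primes of a finitely generated module over a
Noetherian ring. -/
lemma ass_finite_aux (R : Type) [CommRing R] [IsNoetherianRing R] (X : Type) [AddCommGroup X]
    [Module R X] [Module.Finite R X] : (associatedPrimes R X).Finite := by
  have main : ∀ N : Submodule R X, (associatedPrimes R (X ⧸ N)).Finite := by
    intro N
    refine IsNoetherian.induction
      (P := fun N : Submodule R X => (associatedPrimes R (X ⧸ N)).Finite) (fun N ih => ?_) N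
    by_cases hN : N = ⊤
    · subst hN
      haveI : Subsingleton (X ⧸ (⊤ : Submodule R X)) :=
        Submodule.Quotient.subsingleton_iff.mpr rfl
      rw [associatedPrimes.eq_empty_of_subsingleton]
      exact Set.finite_empty
    · haveI : Nontrivial (X ⧸ N) :=
        Submodule.Quotient.nontrivial_iff.mpr hN
      obtain ⟨p, hp⟩ := associatedPrimes.nonempty R (X ⧸ N)
      obtain ⟨hpp, xb, hxb⟩ := isAssociatedPrime_iff.mp hp
      obtain ⟨x, rfl⟩ := Submodule.mkQ_surjective N xb
      have hx0 : N.mkQ x ≠ 0 := by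
        intro h
        apply hpp.ne_top
        rw [hxb, h]
        exact eq_top_iff.mpr fun r _ => Submodule.mem_colon_singleton.mpr (by simp)
      have hxN : x ∉ N := fun h => hx0 (by
        rw [Submodule.mkQ_apply]
        exact (Submodule.Quotient.mk_eq_zero N).mpr h)
      have hlt : N < N ⊔ Submodule.span R {x} := by
        refine lt_of_le_of_ne le_sup_left (fun h => hxN ?_)
        rw [h]
        exact Submodule.mem_sup_right (Submodule.mem_span_singleton_self x)
      have hfin' := ih _ hlt
      have hKspan : Submodule.map N.mkQ (N ⊔ Submodule.span R {x})
          = Submodule.span R {N.mkQ x} := by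
        rw [Submodule.map_sup]
        have h1 : Submodule.map N.mkQ N = ⊥ := by
          rw [eq_bot_iff]
          rintro _ ⟨y, hy, rfl⟩
          simpa using (Submodule.Quotient.mk_eq_zero N).mpr hy
        rw [h1, Submodule.map_span, Set.image_singleton, bot_sup_eq]
      have hKass : associatedPrimes R (Submodule.map N.mkQ (N ⊔ Submodule.span R {x})) ⊆ {p} := by
        rintro q hq'
        obtain ⟨hqp, y, hy⟩ := isAssociatedPrime_iff.mp hq'
        have hy0 : y ≠ 0 := by
          rintro rfl
          exact hqp.ne_top (by
            rw [hy]
            exact eq_top_iff.mpr fun r _ => Submodule.mem_colon_singleton.mpr (by simp))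
      -- y lies in the span of `mkQ x`
        have hyK : (y : X ⧸ N) ∈ Submodule.span R {N.mkQ x} := by
          rw [← hKspan]; exact y.2
        obtain ⟨s, hs⟩ := Submodule.mem_span_singleton.mp hyK
        have hsnp : s ∉ p := by
          intro hsp
          apply hy0
          have hz : s • N.mkQ x = 0 := by
            rw [hxb] at hsp
            exact (Submodule.mem_bot R).mp (Submodule.mem_colon_singleton.mp hsp)
          exact Subtype.ext (by rw [← hs, hz]; rfl)
        have hq : ∀ r : R, r ∈ q ↔ (r * s) • N.mkQ x = 0 := by
          intro r
          rw [hy, Submodule.mem_colon_singleton, Submodule.mem_bot]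
          constructor
          · intro h
            rw [mul_smul, hs]
            have h' := congrArg Subtype.val h
            simpa using h'
          · intro h
            refine Subtype.ext ?_
            simp only [SetLike.val_smul, ZeroMemClass.coe_zero, ← hs, smul_smul]
            exact h
        have hqe : q = p := by
          ext r
          rw [hq r]
          constructor
          · intro h
            have hrs : r * s ∈ p := by
              rw [hxb]
              exact Submodule.mem_colon_singleton.mpr ((Submodule.mem_bot R).mpr h)
            exact (hpp.mem_or_mem hrs).resolve_right hsnp
          · intro hrp
            have hz : r • N.mkQ x = 0 := by
              rw [hxb] at hrp
              exact (Submodule.mem_bot R).mp (Submodule.mem_colon_singleton.mp hrp)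
            rw [mul_comm, mul_smul, hz, smul_zero]
        exact hqe
      have e : ((X ⧸ N) ⧸ Submodule.map N.mkQ (N ⊔ Submodule.span R {x}))
          ≃ₗ[R] X ⧸ (N ⊔ Submodule.span R {x}) :=
        Submodule.quotientQuotientEquivQuotient N _ le_sup_left
      have hsub := ass_subset_aux (Submodule.map N.mkQ (N ⊔ Submodule.span R {x}))
      refine Set.Finite.subset (Set.Finite.union ?_ ?_) hsub
      · exact (Set.finite_singleton p).subset hKass
      · rw [LinearEquiv.AssociatedPrimes.eq e]
        exact hfin'
  have e0 : (X ⧸ (⊥ : Submodule R X)) ≃ₗ[R] X := Submodule.quotEquivOfEqBot ⊥ rfl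
  rw [← LinearEquiv.AssociatedPrimes.eq e0]
  exact main ⊥

/-- In a Noetherian local ring, a nontrivial finitely generated module with trivial socle
admits a regular element in the maximal ideal. -/
lemma exists_reg_aux (R : Type) [CommRing R] [IsLocalRing R] [IsNoetherianRing R]
    (X : Type) [AddCommGroup X] [Module R X] [Module.Finite R X] [Nontrivial X]
    (hsoc : ∀ x : X, (∀ r ∈ maximalIdeal R, r • x = 0) → x = 0) :
    ∃ a ∈ maximalIdeal R, ∀ x : X, a • x = 0 → x = 0 := by
  by_contra hcon
  push_neg at hcon
  have hfin := ass_finite_aux R X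
  have hcover : (maximalIdeal R : Set R) ⊆
      ⋃ p ∈ (hfin.toFinset : Set (Ideal R)), ((id p : Ideal R) : Set R) := by
    intro a ha
    obtain ⟨x, hx0, hxne⟩ := hcon a ha
    obtain ⟨P, hP, hle⟩ := exists_le_isAssociatedPrime_of_isNoetherianRing R x hxne
    have haP : a ∈ P := hle (Submodule.mem_colon_singleton.mpr ((Submodule.mem_bot R).mpr hx0))
    refine Set.mem_biUnion ?_ haP
    rw [Set.Finite.coe_toFinset]
    exact hP
  obtain ⟨p, hps, hmp⟩ := (Ideal.subset_union_prime (f := (id : Ideal R → Ideal R))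
    (maximalIdeal R) (maximalIdeal R)
    (fun i hi _ _ => ((hfin.mem_toFinset).mp hi).isPrime)).mp hcover
  have hpAss : p ∈ associatedPrimes R X := (hfin.mem_toFinset).mp hps
  have hpm : p = maximalIdeal R :=
    le_antisymm (IsLocalRing.le_maximalIdeal hpAss.isPrime.ne_top) hmp
  have hprime := hpAss.isPrime
  obtain ⟨x, hx⟩ := (isAssociatedPrime_iff.mp hpAss).2
  have hx0 : x ≠ 0 := by
    rintro rfl
    refine hprime.ne_top ?_
    rw [hx]
    exact eq_top_iff.mpr fun r _ => Submodule.mem_colon_singleton.mpr (by simp)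
  apply hx0
  apply hsoc
  intro r hr
  have hrp : r ∈ p := hpm ▸ hr
  rw [hx] at hrp
  exact (Submodule.mem_bot R).mp (Submodule.mem_colon_singleton.mp hrp)

end Aux

/-- **Lemma 2.4.** Let `M` be a finitely generated module over a Noetherian local ring `(R, 𝔪)`
with `dim M = d ≥ 1`.  Then there exists a positive integer `n₄` such that for all ideals
`K ⊆ 𝔪^{n₄}` one has `(KM + H⁰_𝔪(M)) :_M 𝔪 = (KM :_M 𝔪) + H⁰_𝔪(M)`. -/
theorem stmt_5
    (R : Type) [CommRing R] [IsLocalRing R] [IsNoetherianRing R]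
    (M : Type) [AddCommGroup M] [Module R M] [Module.Finite R M]
    (d : ℕ) (hd : 1 ≤ d) (hdim : dimEq R M d) :
    ∃ n₄ : ℕ, 0 < n₄ ∧ ∀ K : Ideal R, K ≤ maximalIdeal R ^ n₄ →
      modColon ((K • (⊤ : Submodule R M)) ⊔ H0 R M) (maximalIdeal R) =
        modColon (K • (⊤ : Submodule R M)) (maximalIdeal R) ⊔ H0 R M := by
  classical
  have hNoeth : IsNoetherian R M := inferInstance
  -- the increasing chain of torsion submodules stabilizes
  set f : ℕ →o Submodule R M :=
    ⟨fun n => modColon (⊥ : Submodule R M) (maximalIdeal R ^ n),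
     fun n m h x hx r hr => hx r (Ideal.pow_le_pow_right h hr)⟩ with hf
  obtain ⟨c, hcs⟩ := monotone_stabilizes_iff_noetherian.mpr hNoeth f
  have heq : H0 R M = f c := by
    refine le_antisymm (iSup_le fun n => ?_) (le_iSup (fun n => modColon (⊥ : Submodule R M)
      (maximalIdeal R ^ n)) c)
    rcases le_total n c with h | h
    · exact f.monotone h
    · exact le_of_eq (hcs n h).symm
  have hW1 : ∀ x ∈ H0 R M, ∀ r ∈ maximalIdeal R ^ c, r • x = 0 := by
    intro x hx r hr
    rw [heq] at hx
    simpa using hx r hr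
  have hW2 : ∀ x : M, (∀ r ∈ maximalIdeal R ^ c, r • x = 0) → x ∈ H0 R M := by
    intro x hx
    rw [heq]
    intro r hr
    simpa using hx r hr
  by_cases hWtop : H0 R M = ⊤
  · refine ⟨1, one_pos, fun K hK => ?_⟩
    have h1 : modColon (⊤ : Submodule R M) (maximalIdeal R) = ⊤ :=
      eq_top_iff.mpr (fun x _ r hr => trivial)
    rw [hWtop, sup_top_eq, sup_top_eq, h1]
  -- socle of M / H0 is zero
  have hsoc : ∀ x : M, (∀ r ∈ maximalIdeal R, r • x ∈ H0 R M) → x ∈ H0 R M := by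
    intro x hx
    have hx' : x ∈ f (c + 1) := by
      intro s hs
      rw [pow_succ] at hs
      refine Submodule.mem_bot (R := R) |>.mpr ?_
      refine Submodule.mul_induction_on hs ?_ ?_
      · intro r hr t ht
        rw [mul_smul]
        exact hW1 _ (hx t ht) r hr
      · intro u v hu hv
        rw [add_smul, hu, hv, add_zero]
    rw [heq, hcs (c + 1) (Nat.le_succ c)]
    exact hx'
  -- pass to the quotient by H0 and find a regular element
  haveI : Module.Finite R (M ⧸ H0 R M) :=
    Module.Finite.of_surjective (H0 R M).mkQ (Submodule.mkQ_surjective _)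
  haveI : Nontrivial (M ⧸ H0 R M) :=
    Submodule.Quotient.nontrivial_iff.mpr hWtop
  have hsocQ : ∀ y : M ⧸ H0 R M, (∀ r ∈ maximalIdeal R, r • y = 0) → y = 0 := by
    intro y hy
    obtain ⟨x, rfl⟩ := Submodule.mkQ_surjective (H0 R M) y
    have hx : ∀ r ∈ maximalIdeal R, r • x ∈ H0 R M := by
      intro r hr
      have := hy r hr
      rw [← map_smul] at this
      rw [Submodule.mkQ_apply] at this
      exact (Submodule.Quotient.mk_eq_zero _).mp this
    rw [Submodule.mkQ_apply, Submodule.Quotient.mk_eq_zero]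
    exact hsoc x hx
  obtain ⟨a, ha, hainj⟩ := exists_reg_aux R (M ⧸ H0 R M) hsocQ
  have hreg : ∀ x : M, a • x ∈ H0 R M → x ∈ H0 R M := by
    intro x hx
    have h1 : a • (H0 R M).mkQ x = 0 := by
      rw [← map_smul, Submodule.mkQ_apply, Submodule.Quotient.mk_eq_zero]
      exact hx
    have h2 := hainj _ h1
    rw [Submodule.mkQ_apply, Submodule.Quotient.mk_eq_zero] at h2
    exact h2
  -- Artin-Rees, twice
  obtain ⟨e₁, he₁⟩ := Ideal.exists_pow_inf_eq_pow_smul (maximalIdeal R) (H0 R M)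
  set A : Submodule R M := Ideal.span {a} • ⊤ ⊔ H0 R M with hA
  obtain ⟨e₂, he₂⟩ := Ideal.exists_pow_inf_eq_pow_smul (maximalIdeal R) A
  have hvan : ∀ n, e₁ + c ≤ n →
      (maximalIdeal R ^ n • ⊤ : Submodule R M) ⊓ H0 R M = ⊥ := by
    intro n hn
    rw [he₁ n (by omega), eq_bot_iff]
    refine Submodule.smul_le.mpr ?_
    intro r hr w hw
    have hrc : r ∈ maximalIdeal R ^ c := Ideal.pow_le_pow_right (by omega) hr
    simpa using hW1 w hw.2 r hrc
  refine ⟨e₁ + e₂ + c + 1, by omega, fun K hK => ?_⟩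
  apply le_antisymm
  · -- hard inclusion
    intro x hx
    rw [mem_modColon] at hx
    obtain ⟨y, hy, z, hz, hyz⟩ := Submodule.mem_sup.mp (hx a ha)
    have hym : y ∈ (maximalIdeal R ^ (e₁ + e₂ + c + 1) • ⊤ : Submodule R M) :=
      Submodule.smul_mono_left hK hy
    have hyA : y ∈ A := by
      have h1 : a • x ∈ A := Submodule.mem_sup_left
        (Submodule.smul_mem_smul (Ideal.mem_span_singleton_self a) Submodule.mem_top)
      have h2 : z ∈ A := Submodule.mem_sup_right hz
      have hye : y = a • x - z := by rw [← hyz]; abel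
      rw [hye]
      exact sub_mem h1 h2
    have hy2 : y ∈ (maximalIdeal R ^ (e₁ + c + 1) • A : Submodule R M) := by
      have hmem : y ∈ (maximalIdeal R ^ (e₁ + e₂ + c + 1) • ⊤ : Submodule R M) ⊓ A :=
        ⟨hym, hyA⟩
      rw [he₂ (e₁ + e₂ + c + 1) (by omega)] at hmem
      have hsub : e₁ + e₂ + c + 1 - e₂ = e₁ + c + 1 := by omega
      rw [hsub] at hmem
      exact Submodule.smul_mono le_rfl inf_le_right hmem
    have hsplit : (maximalIdeal R ^ (e₁ + c + 1) • A : Submodule R M) ≤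
        (Submodule.map (LinearMap.lsmul R M a)
          (maximalIdeal R ^ (e₁ + c + 1) • ⊤ : Submodule R M)) ⊔ H0 R M := by
      rw [hA, Submodule.smul_sup]
      refine sup_le ?_ ?_
      · refine Submodule.smul_le.mpr ?_
        intro r hr n hn
        have hmap : n ∈ Submodule.map (LinearMap.lsmul R M a) (⊤ : Submodule R M) := by
          refine (Submodule.smul_le.mpr ?_ : Ideal.span {a} • (⊤ : Submodule R M) ≤ _) hn
          intro s hs v _
          obtain ⟨cc, rfl⟩ := Ideal.mem_span_singleton'.mp hs
          exact ⟨cc • v, Submodule.mem_top, by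
            rw [LinearMap.lsmul_apply, smul_smul, mul_comm a cc]⟩
        obtain ⟨v, -, rfl⟩ := hmap
        refine Submodule.mem_sup_left ?_
        exact ⟨r • v, Submodule.smul_mem_smul hr Submodule.mem_top, by
          rw [LinearMap.lsmul_apply, LinearMap.lsmul_apply, smul_comm]⟩
      · refine le_trans (Submodule.smul_le.mpr fun r _ w hw => (H0 R M).smul_mem r hw)
          le_sup_right
    obtain ⟨y₁, hy₁, z₁, hz₁, hyz₁⟩ := Submodule.mem_sup.mp (hsplit hy2)
    obtain ⟨u, hu, hux⟩ := hy₁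
    rw [LinearMap.lsmul_apply] at hux
    have hxu : x - u ∈ H0 R M := by
      apply hreg
      have hcomp : a • (x - u) = z₁ + z := by
        rw [smul_sub]
        have hax : a • x = a • u + z₁ + z := by rw [← hyz, ← hyz₁, hux]
        rw [hax]
        abel
      rw [hcomp]
      exact add_mem hz₁ hz
    have huC : u ∈ modColon (K • (⊤ : Submodule R M)) (maximalIdeal R) := by
      rw [mem_modColon]
      intro r hr
      obtain ⟨κ, hκ, φ, hφ, hκφ⟩ := Submodule.mem_sup.mp (hx r hr)
      have hψW : r • u - κ ∈ H0 R M := by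
        have hid : r • u - κ = φ - r • (x - u) := by
          have h1 : r • u = r • x - r • (x - u) := by rw [smul_sub]; abel
          rw [h1, ← hκφ]
          abel
        rw [hid]
        exact sub_mem hφ ((H0 R M).smul_mem r hxu)
      have hψm : r • u - κ ∈ (maximalIdeal R ^ (e₁ + c) • ⊤ : Submodule R M) := by
        have h1 : u ∈ (maximalIdeal R ^ (e₁ + c) • ⊤ : Submodule R M) :=
          Submodule.smul_mono_left (Ideal.pow_le_pow_right (by omega)) hu
        have h2 : κ ∈ (maximalIdeal R ^ (e₁ + c) • ⊤ : Submodule R M) :=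
          Submodule.smul_mono_left (hK.trans (Ideal.pow_le_pow_right (by omega))) hκ
        exact sub_mem (Submodule.smul_mem _ r h1) h2
      have h0 : r • u - κ ∈ (⊥ : Submodule R M) := by
        rw [← hvan (e₁ + c) le_rfl]
        exact ⟨hψm, hψW⟩
      have h0' : r • u = κ := by
        have hb := Submodule.mem_bot (R := R) |>.mp h0
        rwa [sub_eq_zero] at hb
      rw [h0']
      exact hκ
    have hxdec : x = u + (x - u) := by abel
    rw [hxdec]
    exact Submodule.add_mem_sup huC hxu
  · -- easy inclusion
    refine sup_le ?_ ?_
    · intro x hx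
      rw [mem_modColon] at hx ⊢
      exact fun r hr => Submodule.mem_sup_left (hx r hr)
    · intro w hw
      rw [mem_modColon]
      exact fun r hr => Submodule.mem_sup_right ((H0 R M).smul_mem r hw)
end
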